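/- In any algebra satisfying (B1)–(B10), with ∼x := (x ∨ ¬x) ∧ ∼̇x, the De Morgan law ∼(x ∨ y) = ∼x ∧ ∼y holds for all x, y. -/
import Mathlib


theorem stmt {A : Type*} [DistribLattice A] [BoundedOrder A]
    (n s : A → A)
    (B1 : ∀ x : A, x ⊓ n x = ⊥)
    (B2 : ∀ x : A, x ⊔ s x = ⊤)
    (B3 : ∀ x : A, n x ⊓ s (n x) = ⊥)
    (B4 : ∀ x : A, s x ⊔ n (s x) = ⊤)
    (B5 : ∀ x y : A, s (x ⊓ y) = s x ⊔ s y)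
    (B6 : ∀ x y : A, n (x ⊔ y) = n x ⊓ n y)
    (B7 : ∀ x y : A, n (x ⊓ n y) = n x ⊔ n (n y))
    (B8 : ∀ x y : A, s (x ⊔ s y) = s x ⊓ s (s y))
    (B9 : ∀ x y : A, (x ⊔ y) ⊓ s (x ⊔ y) ≤ x ⊔ n x)
    (B10 : ∀ x y : A, x ⊓ s x ⊓ y ⊓ s y ≤ s (x ⊔ y))
    (m : A → A) (hm : ∀ x : A, m x = (x ⊔ n x) ⊓ s x) :
    ∀ x y : A, m (x ⊔ y) = m x ⊓ m y := by
  -- s is antitone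
  have sA : ∀ a b : A, a ≤ b → s b ≤ s a := by
    intro a b h
    have h5 := B5 a b
    rw [inf_eq_left.mpr h] at h5
    exact le_sup_right.trans h5.ge
  -- n a ≤ s a
  have nls : ∀ a : A, n a ≤ s a := by
    intro a
    have h : n a = (n a ⊓ a) ⊔ (n a ⊓ s a) := by
      rw [← inf_sup_left, B2, inf_top_eq]
    rw [inf_comm (n a) a, B1 a, bot_sup_eq] at h
    exact h.le.trans inf_le_right
  -- crux lemma
  have crux : ∀ a b : A, a ⊓ s a ⊓ n b ≤ s (a ⊔ b) := by
    intro a b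
    have hx : a = (a ⊔ b) ⊓ (a ⊔ n b) := by
      rw [← sup_inf_left, B1, sup_bot_eq]
    have hs : s a = s (a ⊔ b) ⊔ s (a ⊔ n b) := by
      have := B5 (a ⊔ b) (a ⊔ n b)
      rw [← hx] at this
      exact this
    have h2 : n b ⊓ s (a ⊔ n b) ≤ ⊥ := by
      have h3 := sA (n b) (a ⊔ n b) le_sup_right
      calc n b ⊓ s (a ⊔ n b) ≤ n b ⊓ s (n b) := inf_le_inf_left _ h3
        _ = ⊥ := B3 b
    calc a ⊓ s a ⊓ n b ≤ s a ⊓ n b := inf_le_inf_right _ inf_le_right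
      _ = (s (a ⊔ b) ⊔ s (a ⊔ n b)) ⊓ n b := by rw [hs]
      _ = s (a ⊔ b) ⊓ n b ⊔ s (a ⊔ n b) ⊓ n b := inf_sup_right _ _ _
      _ ≤ s (a ⊔ b) ⊔ ⊥ := sup_le_sup inf_le_left (by rw [inf_comm]; exact h2)
      _ = s (a ⊔ b) := sup_bot_eq _
  intro x y
  rw [hm, hm, hm]
  apply le_antisymm
  · -- LHS ≤ RHS
    have hsplit : (x ⊔ y ⊔ n (x ⊔ y)) ⊓ s (x ⊔ y)
        = (x ⊔ y) ⊓ s (x ⊔ y) ⊔ n (x ⊔ y) ⊓ s (x ⊔ y) := inf_sup_right _ _ _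
    have hA : (x ⊔ y ⊔ n (x ⊔ y)) ⊓ s (x ⊔ y) ≤ x ⊔ n x := by
      rw [hsplit]
      refine sup_le (B9 x y) ?_
      calc n (x ⊔ y) ⊓ s (x ⊔ y) ≤ n (x ⊔ y) := inf_le_left
        _ = n x ⊓ n y := B6 x y
        _ ≤ n x := inf_le_left
        _ ≤ x ⊔ n x := le_sup_right
    have hB : (x ⊔ y ⊔ n (x ⊔ y)) ⊓ s (x ⊔ y) ≤ y ⊔ n y := by
      rw [hsplit]
      refine sup_le ?_ ?_
      · rw [sup_comm x y]; exact B9 y x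
      · calc n (x ⊔ y) ⊓ s (x ⊔ y) ≤ n (x ⊔ y) := inf_le_left
          _ = n x ⊓ n y := B6 x y
          _ ≤ n y := inf_le_right
          _ ≤ y ⊔ n y := le_sup_right
    have hSx : (x ⊔ y ⊔ n (x ⊔ y)) ⊓ s (x ⊔ y) ≤ s x :=
      inf_le_right.trans (sA x (x ⊔ y) le_sup_left)
    have hSy : (x ⊔ y ⊔ n (x ⊔ y)) ⊓ s (x ⊔ y) ≤ s y :=
      inf_le_right.trans (sA y (x ⊔ y) le_sup_right)
    exact le_inf (le_inf hA hSx) (le_inf hB hSy)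
  · -- RHS ≤ LHS
    refine le_inf ?_ ?_
    · -- ≤ x ⊔ y ⊔ n (x ⊔ y)
      calc (x ⊔ n x) ⊓ s x ⊓ ((y ⊔ n y) ⊓ s y)
          ≤ (x ⊔ n x) ⊓ (y ⊔ n y) := inf_le_inf inf_le_left inf_le_left
        _ = (x ⊔ n x) ⊓ y ⊔ (x ⊔ n x) ⊓ n y := inf_sup_left _ _ _
        _ ≤ (x ⊔ y) ⊔ n x ⊓ n y := by
            refine sup_le (inf_le_right.trans ?_) ?_
            · exact le_sup_of_le_left le_sup_right
            · rw [inf_sup_right]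
              refine sup_le (inf_le_left.trans ?_) le_sup_right
              exact le_sup_of_le_left le_sup_left
        _ = x ⊔ y ⊔ n (x ⊔ y) := by rw [B6]
    · -- ≤ s (x ⊔ y)
      have e1 : (x ⊔ n x) ⊓ s x = x ⊓ s x ⊔ n x := by
        rw [inf_sup_right, inf_eq_left.mpr (nls x)]
      have e2 : (y ⊔ n y) ⊓ s y = y ⊓ s y ⊔ n y := by
        rw [inf_sup_right, inf_eq_left.mpr (nls y)]
      rw [e1, e2]
      have t1 : x ⊓ s x ⊓ (y ⊓ s y) ≤ s (x ⊔ y) := by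
        rw [← inf_assoc]; exact B10 x y
      have t2 : x ⊓ s x ⊓ n y ≤ s (x ⊔ y) := crux x y
      have t3 : n x ⊓ (y ⊓ s y) ≤ s (x ⊔ y) := by
        rw [inf_comm, sup_comm x y]; exact crux y x
      have t4 : n x ⊓ n y ≤ s (x ⊔ y) := by
        rw [← B6]; exact nls (x ⊔ y)
      calc (x ⊓ s x ⊔ n x) ⊓ (y ⊓ s y ⊔ n y)
          = (x ⊓ s x ⊔ n x) ⊓ (y ⊓ s y) ⊔ (x ⊓ s x ⊔ n x) ⊓ n y := inf_sup_left _ _ _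
        _ = (x ⊓ s x ⊓ (y ⊓ s y) ⊔ n x ⊓ (y ⊓ s y))
            ⊔ (x ⊓ s x ⊓ n y ⊔ n x ⊓ n y) := by rw [inf_sup_right, inf_sup_right]
        _ ≤ s (x ⊔ y) := sup_le (sup_le t1 t3) (sup_le t2 t4)
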